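/- Let (X,T) and (Y,S) be minimal topological dynamical systems on compact metric spaces, and let π: X → Y be a factor map such that the fiber π^{−1}(y) has exactly two elements for every y ∈ Y. Then there exists a homeomorphism Φ: X → X with Φ∘T = T∘Φ, Φ∘Φ = id_X, π∘Φ = π, and Φ(x) ≠ x for every x ∈ X; in particular Aut(X,T) contains an element of order 2. -/
import Mathlib

lemma pair_dist_aux {X : Type*} [MetricSpace X] {c d u v : X}
    (hu : u = c ∨ u = d) (hv : v = c ∨ v = d) (huv : u ≠ v) :
    dist u v = dist c d := by
  rcases hu with rfl | rfl <;> rcases hv with rfl | rfl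
  · exact absurd rfl huv
  · rfl
  · exact dist_comm u v
  · exact absurd rfl huv

/-- Uniform separation of the two points in each fiber, from minimality of the base. -/
lemma sep_aux {X Y : Type*} [MetricSpace X] [CompactSpace X]
    [MetricSpace Y] [CompactSpace Y]
    (T : X ≃ₜ X) (S : Y ≃ₜ Y)
    (hSmin : ∀ y : Y,
      Dense (Set.range (fun n : ℕ => (⇑S)^[n] y) ∪
        Set.range (fun n : ℕ => (⇑S.symm)^[n] y)))
    (π : X → Y) (hπc : Continuous π)
    (hcomm : ∀ x : X, π (T x) = S (π x))
    (hfib : ∀ y : Y, ∃ a b : X, a ≠ b ∧ π ⁻¹' {y} = {a, b})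
    [Nonempty X] :
    ∃ δ > 0, ∀ a b : X, π a = π b → a ≠ b → δ ≤ dist a b := by
  have hNY : Nonempty Y := ⟨π (Classical.arbitrary X)⟩
  -- the closed sets of "δ-separated fibers"
  set F : ℕ → Set Y := fun n =>
    {y : Y | ∃ a b : X, π a = y ∧ π b = y ∧ (1 : ℝ) / (n + 1) ≤ dist a b} with hF
  have hFclosed : ∀ n : ℕ, IsClosed (F n) := by
    intro n
    have heq : F n = (fun p : X × X => π p.1) ''
        {p : X × X | π p.1 = π p.2 ∧ (1 : ℝ) / (n + 1) ≤ dist p.1 p.2} := by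
      ext y
      constructor
      · rintro ⟨a, b, ha, hb, hd⟩
        exact ⟨(a, b), ⟨ha.trans hb.symm, hd⟩, ha⟩
      · rintro ⟨⟨a, b⟩, ⟨hab, hd⟩, rfl⟩
        exact ⟨a, b, rfl, hab.symm, hd⟩
    have hc : IsClosed {p : X × X | π p.1 = π p.2 ∧ (1 : ℝ) / (n + 1) ≤ dist p.1 p.2} :=
      (isClosed_eq (hπc.comp continuous_fst) (hπc.comp continuous_snd)).inter
        (isClosed_le continuous_const continuous_dist)
    rw [heq]
    exact (hc.isCompact.image (hπc.comp continuous_fst)).isClosed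
  have hcover : (⋃ n : ℕ, F n) = Set.univ := by
    ext y
    simp only [Set.mem_iUnion, Set.mem_univ, iff_true]
    obtain ⟨a, b, hab, hfe⟩ := hfib y
    have hma : π a = y := by
      have : a ∈ π ⁻¹' {y} := by rw [hfe]; exact Set.mem_insert a {b}
      simpa using this
    have hmb : π b = y := by
      have : b ∈ π ⁻¹' {y} := by rw [hfe]; exact Set.mem_insert_of_mem a rfl
      simpa using this
    obtain ⟨n, hn⟩ := exists_nat_one_div_lt (dist_pos.mpr hab)
    exact ⟨n, a, b, hma, hmb, hn.le⟩
  obtain ⟨n0, hn0⟩ := nonempty_interior_of_iUnion_of_closed hFclosed hcover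
  set V : Set Y := interior (F n0) with hV
  have hVopen : IsOpen V := isOpen_interior
  set δ0 : ℝ := (1 : ℝ) / (n0 + 1) with hδ0def
  have hδ0 : 0 < δ0 := by positivity
  -- the key local estimate, for any map commuting with π
  have key : ∀ (f : X → X) (g : Y → Y), Continuous f → Function.Injective f →
      Continuous g → (∀ x, π (f x) = g (π x)) → ∀ y : Y, g y ∈ V →
      ∃ δ > 0, ∃ W : Set Y, W ∈ nhds y ∧
        ∀ y' ∈ W, ∀ a b : X, π a = y' → π b = y' → a ≠ b → δ ≤ dist a b := by
    intro f g hfc hfi hgc hfg y hyV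
    obtain ⟨δ, hδpos, hδ⟩ := Metric.uniformContinuous_iff.mp
      (CompactSpace.uniformContinuous_of_continuous hfc) δ0 hδ0
    refine ⟨δ, hδpos, g ⁻¹' V, (hVopen.preimage hgc).mem_nhds hyV, ?_⟩
    intro y' hy' a b ha hb hab
    have hmem : g y' ∈ F n0 := interior_subset hy'
    obtain ⟨a', b', ha', hb', hd'⟩ := hmem
    obtain ⟨c, d, hcd, hfe⟩ := hfib (g y')
    have mem_iff : ∀ z : X, π z = g y' → (z = c ∨ z = d) := by
      intro z hz
      have : z ∈ π ⁻¹' {g y'} := by simpa using hz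
      rw [hfe] at this
      simpa using this
    have hfa : π (f a) = g y' := by rw [hfg, ha]
    have hfb : π (f b) = g y' := by rw [hfg, hb]
    have hne' : a' ≠ b' := by
      intro h
      rw [h, dist_self] at hd'
      linarith
    have hdist_eq : dist (f a) (f b) = dist c d :=
      pair_dist_aux (mem_iff _ hfa) (mem_iff _ hfb) (fun h => hab (hfi h))
    have hdist'_eq : dist a' b' = dist c d :=
      pair_dist_aux (mem_iff _ ha') (mem_iff _ hb') hne'
    have hge : δ0 ≤ dist (f a) (f b) := by rw [hdist_eq, ← hdist'_eq]; exact hd'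
    by_contra hcon
    push_neg at hcon
    have := hδ hcon
    linarith
  -- commutation of iterates
  have hcommT : ∀ (n : ℕ) (x : X), π ((⇑T)^[n] x) = (⇑S)^[n] (π x) := by
    intro n
    induction n with
    | zero => intro x; simp
    | succ n ih =>
      intro x
      rw [Function.iterate_succ_apply', Function.iterate_succ_apply', hcomm, ih]
  have hcomm2 : ∀ x : X, π (T.symm x) = S.symm (π x) := by
    intro x
    have h := hcomm (T.symm x)
    rw [T.apply_symm_apply] at h
    rw [h, S.symm_apply_apply]
  have hcommT' : ∀ (n : ℕ) (x : X), π ((⇑T.symm)^[n] x) = (⇑S.symm)^[n] (π x) := by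
    intro n
    induction n with
    | zero => intro x; simp
    | succ n ih =>
      intro x
      rw [Function.iterate_succ_apply', Function.iterate_succ_apply', hcomm2, ih]
  -- the local estimate at every point of Y
  have hloc : ∀ y : Y, ∃ δ > 0, ∃ W : Set Y, W ∈ nhds y ∧
      ∀ y' ∈ W, ∀ a b : X, π a = y' → π b = y' → a ≠ b → δ ≤ dist a b := by
    intro y
    obtain ⟨z, hz, hzV⟩ := (hSmin y).exists_mem_open hVopen hn0
    rcases hz with hz | hz
    · obtain ⟨n, rfl⟩ := hz
      exact key ((⇑T)^[n]) ((⇑S)^[n]) (T.continuous.iterate n) (T.injective.iterate n)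
        (S.continuous.iterate n) (hcommT n) y hzV
    · obtain ⟨n, rfl⟩ := hz
      exact key ((⇑T.symm)^[n]) ((⇑S.symm)^[n]) (T.symm.continuous.iterate n)
        (T.symm.injective.iterate n) (S.symm.continuous.iterate n) (hcommT' n) y hzV
  choose δy hδy W hW hWP using hloc
  obtain ⟨t, -, ht⟩ := isCompact_univ.elim_nhds_subcover W (fun y _ => hW y)
  have htne : t.Nonempty := by
    by_contra h
    rw [Finset.not_nonempty_iff_eq_empty] at h
    subst h
    obtain ⟨y⟩ := hNY
    have := ht (Set.mem_univ y)
    simpa using this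
  refine ⟨t.inf' htne δy, ?_, ?_⟩
  · simp only [gt_iff_lt, Finset.lt_inf'_iff]
    exact fun y _ => hδy y
  · intro a b hab hne
    have hmem : π a ∈ ⋃ y ∈ t, W y := ht (Set.mem_univ _)
    simp only [Set.mem_iUnion] at hmem
    obtain ⟨y, hyt, hmemW⟩ := hmem
    exact le_trans (Finset.inf'_le δy hyt) (hWP y (π a) hmemW a b rfl hab.symm hne)

/-- a uniformly 2-to-1 factor map between minimal topological dynamical
systems on compact metric spaces yields an automorphism of order 2 of the extension,
which exchanges the two points in each fiber. -/
theorem stmt_3 {X Y : Type*} [MetricSpace X] [CompactSpace X]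
    [MetricSpace Y] [CompactSpace Y]
    (T : X ≃ₜ X) (S : Y ≃ₜ Y)
    (hTmin : ∀ x : X,
      Dense (Set.range (fun n : ℕ => (⇑T)^[n] x) ∪
        Set.range (fun n : ℕ => (⇑T.symm)^[n] x)))
    (hSmin : ∀ y : Y,
      Dense (Set.range (fun n : ℕ => (⇑S)^[n] y) ∪
        Set.range (fun n : ℕ => (⇑S.symm)^[n] y)))
    (π : X → Y) (hπc : Continuous π) (hπs : Function.Surjective π)
    (hcomm : ∀ x : X, π (T x) = S (π x))
    (hfib : ∀ y : Y, ∃ a b : X, a ≠ b ∧ π ⁻¹' {y} = {a, b}) :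
    ∃ Φ : X ≃ₜ X, (∀ x, Φ (T x) = T (Φ x)) ∧ (∀ x, Φ (Φ x) = x) ∧
      (∀ x, π (Φ x) = π x) ∧ ∀ x, Φ x ≠ x := by
  rcases isEmpty_or_nonempty X with hE | hNE
  · exact ⟨Homeomorph.refl X, fun x => isEmptyElim x, fun x => isEmptyElim x,
      fun x => isEmptyElim x, fun x => isEmptyElim x⟩
  -- membership facts
  have hx_mem : ∀ (x a b : X), π ⁻¹' {π x} = {a, b} → x = a ∨ x = b := by
    intro x a b h
    have : x ∈ π ⁻¹' {π x} := by simp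
    rw [h] at this
    simpa using this
  -- the partner map exists
  have hex : ∀ x : X, ∃ z : X, π z = π x ∧ z ≠ x := by
    intro x
    obtain ⟨a, b, hab, h⟩ := hfib (π x)
    have hma : π a = π x := by
      have : a ∈ π ⁻¹' {π x} := by rw [h]; exact Set.mem_insert a {b}
      simpa using this
    have hmb : π b = π x := by
      have : b ∈ π ⁻¹' {π x} := by rw [h]; exact Set.mem_insert_of_mem a rfl
      simpa using this
    rcases hx_mem x a b h with rfl | rfl
    · exact ⟨b, hmb, fun hh => hab hh.symm⟩
    · exact ⟨a, hma, hab⟩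
  set Φ0 : X → X := fun x => Classical.choose (hex x) with hΦ0
  have hΦ : ∀ x : X, π (Φ0 x) = π x ∧ Φ0 x ≠ x := fun x => Classical.choose_spec (hex x)
  have huniq : ∀ x z : X, π z = π x → z ≠ x → z = Φ0 x := by
    intro x z hz hzx
    obtain ⟨a, b, hab, h⟩ := hfib (π x)
    have hz' : z = a ∨ z = b := by
      have : z ∈ π ⁻¹' {π x} := by simpa using hz
      rw [h] at this
      simpa using this
    have hp' : Φ0 x = a ∨ Φ0 x = b := by
      have : Φ0 x ∈ π ⁻¹' {π x} := by simpa using (hΦ x).1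
      rw [h] at this
      simpa using this
    rcases hx_mem x a b h with hxa | hxb
    · have hz2 : z = b := by
        rcases hz' with h1 | h1
        · exact absurd (h1.trans hxa.symm) hzx
        · exact h1
      have hp2 : Φ0 x = b := by
        rcases hp' with h1 | h1
        · exact absurd (h1.trans hxa.symm) (hΦ x).2
        · exact h1
      rw [hz2, hp2]
    · have hz2 : z = a := by
        rcases hz' with h1 | h1
        · exact h1
        · exact absurd (h1.trans hxb.symm) hzx
      have hp2 : Φ0 x = a := by
        rcases hp' with h1 | h1
        · exact h1
        · exact absurd (h1.trans hxb.symm) (hΦ x).2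
      rw [hz2, hp2]
  have hinv : ∀ x : X, Φ0 (Φ0 x) = x :=
    fun x => (huniq (Φ0 x) x (hΦ x).1.symm (fun h => (hΦ x).2 h.symm)).symm
  have hcommΦ : ∀ x : X, Φ0 (T x) = T (Φ0 x) := by
    intro x
    refine (huniq (T x) (T (Φ0 x)) ?_ ?_).symm
    · rw [hcomm, hcomm, (hΦ x).1]
    · intro h
      exact (hΦ x).2 (T.injective h)
  -- uniform separation
  obtain ⟨δ, hδ, hsep⟩ := sep_aux T S hSmin π hπc hcomm hfib
  -- continuity via closed graph
  have hG : IsClosed {p : X × X | π p.1 = π p.2 ∧ δ ≤ dist p.1 p.2} :=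
    (isClosed_eq (hπc.comp continuous_fst) (hπc.comp continuous_snd)).inter
      (isClosed_le continuous_const continuous_dist)
  have hcont : Continuous Φ0 := by
    rw [continuous_iff_isClosed]
    intro C hC
    have heq : Φ0 ⁻¹' C = Prod.fst ''
        ({p : X × X | π p.1 = π p.2 ∧ δ ≤ dist p.1 p.2} ∩ Set.univ ×ˢ C) := by
      ext x
      simp only [Set.mem_preimage, Set.mem_image, Set.mem_inter_iff, Set.mem_prod,
        Set.mem_univ, true_and, Set.mem_setOf_eq]
      constructor
      · intro hx
        exact ⟨(x, Φ0 x), ⟨⟨(hΦ x).1.symm,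
          hsep x (Φ0 x) (hΦ x).1.symm (fun h => (hΦ x).2 h.symm)⟩, hx⟩, rfl⟩
      · rintro ⟨⟨x1, z⟩, ⟨⟨h1, h2⟩, h3⟩, rfl⟩
        have hzne : z ≠ x1 := by
          intro h
          rw [h, dist_self] at h2
          linarith
        have := huniq x1 z h1.symm hzne
        rwa [← this]
    rw [heq]
    exact ((hG.inter (isClosed_univ.prod hC)).isCompact.image continuous_fst).isClosed
  exact ⟨⟨⟨Φ0, Φ0, hinv, hinv⟩, hcont, hcont⟩, hcommΦ, hinv,
    fun x => (hΦ x).1, fun x => (hΦ x).2⟩
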